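/- Let α > 0 and β > 0, and let c_{k,n} ∈ (0,1) satisfy lim_{n→∞} c_{k,n} / (k^α/n^β) = 1 for every fixed integer k ≥ 1. Set aₙ = n^β. Then for every fixed k ≥ 1 and every real s with 0 < s < k^{α+1}, lim_{n→∞} k c_{k,n} (1-c_{k,n})^{k-1} / (e^{-s/aₙ} - (1-c_{k,n})^k) = k^{α+1} / (k^{α+1} - s). -/

import Mathlib

open Filter

/-- Let `α, β > 0` and let `c_{k,n} ∈ (0,1)` satisfy
`c_{k,n} / (k^α/n^β) → 1` as `n → ∞` for every fixed `k ≥ 1`.  With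
`aₙ = n^β`, for every fixed `k ≥ 1` and every `s` with `0 < s < k^{α+1}`,
`k c_{k,n} (1-c_{k,n})^{k-1} / (e^{-s/aₙ} - (1-c_{k,n})^k) →
  k^{α+1} / (k^{α+1} - s)`. -/
theorem stmt_14 (α β : ℝ) (hα : 0 < α) (hβ : 0 < β)
    (c : ℕ → ℕ → ℝ) (hc : ∀ k n : ℕ, c k n ∈ Set.Ioo (0 : ℝ) 1)
    (hlim : ∀ k : ℕ, 1 ≤ k →
      Tendsto (fun n : ℕ => c k n / ((k : ℝ) ^ α / (n : ℝ) ^ β)) atTop (nhds 1))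
    (k : ℕ) (hk : 1 ≤ k) (s : ℝ) (hs : 0 < s) (hsk : s < (k : ℝ) ^ (α + 1)) :
    Tendsto
      (fun n : ℕ => (k : ℝ) * c k n * (1 - c k n) ^ (k - 1) /
        (Real.exp (-s / (n : ℝ) ^ β) - (1 - c k n) ^ k))
      atTop (nhds ((k : ℝ) ^ (α + 1) / ((k : ℝ) ^ (α + 1) - s))) := by
  have hk0 : (0:ℝ) < (k:ℝ) := by exact_mod_cast hk
  set K : ℝ := (k:ℝ) ^ α with hK
  have hKpos : 0 < K := Real.rpow_pos_of_pos hk0 α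
  have hKk : (k : ℝ) ^ (α + 1) = K * k := by
    rw [hK, Real.rpow_add hk0, Real.rpow_one]
  have hnb : Tendsto (fun n : ℕ => ((n : ℝ)) ^ β) atTop atTop :=
    (tendsto_rpow_atTop hβ).comp tendsto_natCast_atTop_atTop
  -- A n = c k n * n^β → K
  have hA : Tendsto (fun n : ℕ => c k n * (n : ℝ) ^ β) atTop (nhds K) := by
    have h := (hlim k hk).mul_const K
    rw [one_mul] at h
    refine h.congr' ?_
    filter_upwards [eventually_ge_atTop 1] with n hn
    have hnpos : (0:ℝ) < (n : ℝ) ^ β :=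
      Real.rpow_pos_of_pos (by exact_mod_cast hn) β
    field_simp
    rw [hK]
  -- c k n → 0
  have hc0 : Tendsto (fun n : ℕ => c k n) atTop (nhds 0) := by
    have h := hA.div_atTop hnb
    refine h.congr' ?_
    filter_upwards [eventually_ge_atTop 1] with n hn
    have hnpos : (0:ℝ) < (n : ℝ) ^ β :=
      Real.rpow_pos_of_pos (by exact_mod_cast hn) β
    field_simp
  -- numerator times n^β
  have hNum : Tendsto
      (fun n : ℕ => (k : ℝ) * c k n * (1 - c k n) ^ (k - 1) * (n : ℝ) ^ β)
      atTop (nhds (K * k)) := by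
    have hpow : Tendsto (fun n : ℕ => (1 - c k n) ^ (k - 1)) atTop (nhds 1) := by
      have := ((tendsto_const_nhds : Tendsto (fun _ : ℕ => (1:ℝ)) atTop (nhds 1)).sub hc0).pow (k - 1)
      simpa using this
    have h := ((tendsto_const_nhds.mul hA).mul hpow : Tendsto
        (fun n : ℕ => (k : ℝ) * (c k n * (n : ℝ) ^ β) * (1 - c k n) ^ (k - 1))
        atTop (nhds ((k : ℝ) * K * 1)))
    have heq : (k : ℝ) * K * 1 = K * k := by ring
    rw [heq] at h
    refine h.congr fun n => by ring
  -- (exp(-s/n^β) - 1) * n^β → -s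
  have hx : Tendsto (fun n : ℕ => -s / (n : ℝ) ^ β) atTop (nhds 0) :=
    tendsto_const_nhds.div_atTop hnb
  have h1 : Tendsto (fun n : ℕ => (Real.exp (-s / (n : ℝ) ^ β) - 1) * (n : ℝ) ^ β)
      atTop (nhds (-s)) := by
    have hslope := hasDerivAt_iff_tendsto_slope.mp (Real.hasDerivAt_exp 0)
    rw [Real.exp_zero] at hslope
    have hmem : ∀ᶠ n : ℕ in atTop, -s / (n : ℝ) ^ β ∈ ({0}ᶜ : Set ℝ) := by
      filter_upwards [eventually_ge_atTop 1] with n hn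
      have hnpos : (0:ℝ) < (n : ℝ) ^ β :=
        Real.rpow_pos_of_pos (by exact_mod_cast hn) β
      simp only [Set.mem_compl_iff, Set.mem_singleton_iff]
      exact div_ne_zero (by linarith) (ne_of_gt hnpos)
    have hcomp := hslope.comp (tendsto_nhdsWithin_iff.mpr ⟨hx, hmem⟩)
    have h := hcomp.const_mul (-s)
    rw [mul_one] at h
    refine h.congr' ?_
    filter_upwards [eventually_ge_atTop 1] with n hn
    have hnpos : (0:ℝ) < (n : ℝ) ^ β :=
      Real.rpow_pos_of_pos (by exact_mod_cast hn) β
    show -s * slope Real.exp 0 (-s / (n : ℝ) ^ β) = _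
    rw [slope_def_field, Real.exp_zero]
    have hx0 : -s / (n : ℝ) ^ β ≠ 0 := div_ne_zero (by linarith) (ne_of_gt hnpos)
    field_simp
    rw [mul_zero, sub_zero, div_neg, neg_neg, mul_div_cancel_left₀ _ (ne_of_gt hs)]
  -- (1 - (1-c)^k) * n^β → K * k
  have hsum : Tendsto (fun n : ℕ => ∑ i ∈ Finset.range k, (1 - c k n) ^ i)
      atTop (nhds k) := by
    have h : Tendsto (fun n : ℕ => ∑ i ∈ Finset.range k, (1 - c k n) ^ i)
        atTop (nhds (∑ i ∈ Finset.range k, (1:ℝ) ^ i)) := by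
      refine tendsto_finset_sum _ fun i _ => ?_
      have := ((tendsto_const_nhds : Tendsto (fun _ : ℕ => (1:ℝ)) atTop (nhds 1)).sub hc0).pow i
      simpa using this
    simpa using h
  have h2 : Tendsto (fun n : ℕ => (1 - (1 - c k n) ^ k) * (n : ℝ) ^ β)
      atTop (nhds (K * k)) := by
    refine (hA.mul hsum).congr' ?_
    filter_upwards [eventually_ge_atTop 1] with n hn
    have hgs := geom_sum_mul (1 - c k n) k
    show c k n * (n : ℝ) ^ β * (∑ i ∈ Finset.range k, (1 - c k n) ^ i) = _
    linear_combination (-((n:ℝ) ^ β)) * hgs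
  -- denominator times n^β
  have hDen : Tendsto
      (fun n : ℕ => (Real.exp (-s / (n : ℝ) ^ β) - (1 - c k n) ^ k) * (n : ℝ) ^ β)
      atTop (nhds (K * k - s)) := by
    have h := h1.add h2
    have heq : -s + K * k = K * k - s := by ring
    rw [heq] at h
    refine h.congr fun n => by ring
  have hne : K * k - s ≠ 0 := by
    rw [hKk] at hsk; linarith
  have hfinal := hNum.div hDen hne
  rw [hKk]
  refine hfinal.congr' ?_
  filter_upwards [eventually_ge_atTop 1] with n hn
  have hnpos : (0:ℝ) < (n : ℝ) ^ β :=
    Real.rpow_pos_of_pos (by exact_mod_cast hn) β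
  exact mul_div_mul_right _ _ (ne_of_gt hnpos)
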